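/- Let M ⊆ ℝ^D be a compact C² submanifold with (possibly empty) boundary whose reach satisfies τ_M ≥ τ_min > 0. For any two points p, q ∈ M with ‖p - q‖ ≤ τ_min, the geodesic distance in M satisfies ‖p - q‖ ≤ d_M(p,q) ≤ 2‖p - q‖. -/

import Mathlib

open Set Metric ENNReal NNReal

noncomputable section

abbrev Euc (D : ℕ) := EuclideanSpace ℝ (Fin D)

/-- The medial axis of a set `S`: ambient points having at least two nearest points on `S`. -/
def medialAxis {D : ℕ} (S : Set (Euc D)) : Set (Euc D) :=
  {z | ∃ x ∈ S, ∃ y ∈ S, x ≠ y ∧ dist z x = Metric.infDist z S ∧ dist z y = Metric.infDist z S}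

/-- The reach of a set: the infimal distance from its medial axis to the set. -/
def reach {D : ℕ} (S : Set (Euc D)) : ℝ≥0∞ :=
  ⨅ z ∈ medialAxis S, EMetric.infEdist z S

/-- Geodesic (intrinsic) distance in `S`: infimum of lengths of continuous paths in `S`
joining `x` to `y` (`∞` if there is none). -/
def geodesicDist {D : ℕ} (S : Set (Euc D)) (x y : Euc D) : ℝ≥0∞ :=
  ⨅ (γ : ℝ → Euc D) (_ : ContinuousOn γ (Set.Icc 0 1))
    (_ : Set.MapsTo γ (Set.Icc 0 1) S) (_ : γ 0 = x) (_ : γ 1 = y),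
    eVariationOn γ (Set.Icc 0 1)

/-- The model space `ℝ^d × {0}^{D-d}` inside `ℝ^D`. -/
def fullModel (D d : ℕ) : Set (Euc D) := {x | ∀ i : Fin D, d ≤ (i : ℕ) → x i = 0}

/-- The model half-space `ℝ^{d-1} × ℝ₊ × {0}^{D-d}` inside `ℝ^D`. -/
def halfModel (D d : ℕ) : Set (Euc D) :=
  {x | (∀ i : Fin D, d ≤ (i : ℕ) → x i = 0) ∧ ∃ i : Fin D, (i : ℕ) + 1 = d ∧ 0 ≤ x i}

/-- `p` is a point of `M` around which `M` is C²-parametrized by the given model set. -/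
def IsChartedPoint {D : ℕ} (model : Set (Euc D)) (M : Set (Euc D)) (p : Euc D) : Prop :=
  ∃ (U V : Set (Euc D)) (Ψ Φ : Euc D → Euc D),
    IsOpen U ∧ IsOpen V ∧ (0 : Euc D) ∈ U ∧ p ∈ V ∧
    ContDiffOn ℝ 2 Ψ U ∧ ContDiffOn ℝ 2 Φ V ∧ Set.BijOn Ψ U V ∧
    (∀ x ∈ U, Φ (Ψ x) = x) ∧ Ψ 0 = p ∧ Ψ '' (U ∩ model) = M ∩ V

/-- `M ⊆ ℝ^D` is a `d`-dimensional C² submanifold with (possibly empty) boundary. -/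
def IsC2SubmanifoldWithBoundary {D : ℕ} (d : ℕ) (M : Set (Euc D)) : Prop :=
  IsClosed M ∧ ∀ p ∈ M, IsChartedPoint (fullModel D d) M p ∨ IsChartedPoint (halfModel D d) M p

/-- The (differential) boundary `∂M` of `M`: points carrying a half-space chart. -/
def boundaryOf {D : ℕ} (d : ℕ) (M : Set (Euc D)) : Set (Euc D) :=
  {p ∈ M | IsChartedPoint (halfModel D d) M p}

/-- The tangent space of `M` at `x`: the linear span of the tangent cone. -/
def tangentSpaceAt {D : ℕ} (M : Set (Euc D)) (x : Euc D) : Submodule ℝ (Euc D) :=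
  Submodule.span ℝ (tangentConeAt ℝ M x)

/-- The normal cone of `M` at `x`: the dual cone of the tangent cone. -/
def normalConeAt {D : ℕ} (M : Set (Euc D)) (x : Euc D) : Set (Euc D) :=
  {v | ∀ u ∈ tangentConeAt ℝ M x, (inner ℝ u v : ℝ) ≤ 0}

/-- Orthogonal projection onto a subspace, as a continuous linear map `E →L[ℝ] E`. -/
def projSub {D : ℕ} (T : Submodule ℝ (Euc D)) : Euc D →L[ℝ] Euc D :=
  T.subtypeL.comp (Submodule.orthogonalProjectionOnto T)

/-- Angle between two linear subspaces: operator norm of the difference of projections. -/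
def angleS {D : ℕ} (T T' : Submodule ℝ (Euc D)) : ℝ := ‖projSub T - projSub T'‖

/-- `η` is the unit outward-pointing normal of `M` at `p`:
the unit vector of `Nor(p,M) ∩ T_p M`. -/
def IsOutwardNormalAt {D : ℕ} (M : Set (Euc D)) (p η : Euc D) : Prop :=
  η ∈ normalConeAt M p ∧ η ∈ tangentSpaceAt M p ∧ ‖η‖ = 1

open RealInnerProductSpace Filter

open Classical in
/-- Nearest-point projection (choice of a nearest point, identity if none exists). -/
def projPt {D : ℕ} (M : Set (Euc D)) (z : Euc D) : Euc D :=
  if h : ∃ y ∈ M, Metric.infDist z M = dist z y then h.choose else z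

section Aux

variable {D : ℕ} {M : Set (Euc D)} {τ : ℝ}

lemma projPt_spec (hcp : IsCompact M) (hne : M.Nonempty) (z : Euc D) :
    projPt M z ∈ M ∧ Metric.infDist z M = dist z (projPt M z) := by
  have h := hcp.exists_infDist_eq_dist hne z
  classical
  rw [projPt, dif_pos h]
  exact ⟨h.choose_spec.1, h.choose_spec.2⟩

lemma projPt_mem (hcp : IsCompact M) (hne : M.Nonempty) (z : Euc D) : projPt M z ∈ M :=
  (projPt_spec hcp hne z).1

lemma dist_projPt (hcp : IsCompact M) (hne : M.Nonempty) (z : Euc D) :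
    dist z (projPt M z) = Metric.infDist z M :=
  (projPt_spec hcp hne z).2.symm

lemma norm_sub_projPt (hcp : IsCompact M) (hne : M.Nonempty) (z : Euc D) :
    ‖z - projPt M z‖ = Metric.infDist z M := by
  rw [← dist_eq_norm]; exact dist_projPt hcp hne z

/-- The uniqueness hypothesis coming from the reach bound. -/
def UniqNear (M : Set (Euc D)) (τ : ℝ) : Prop :=
  ∀ z : Euc D, Metric.infDist z M < τ → ∀ b ∈ M, ∀ c ∈ M,
    dist z b = Metric.infDist z M → dist z c = Metric.infDist z M → b = c

lemma projPt_eq_of (hcp : IsCompact M) (hne : M.Nonempty) (hu : UniqNear M τ)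
    {z b : Euc D} (hz : Metric.infDist z M < τ) (hb : b ∈ M)
    (hd : dist z b = Metric.infDist z M) : b = projPt M z :=
  hu z hz b hb (projPt M z) (projPt_mem hcp hne z) hd (dist_projPt hcp hne z)

lemma projPt_of_mem (hcp : IsCompact M) (hne : M.Nonempty) {z : Euc D} (hz : z ∈ M) :
    projPt M z = z := by
  have h0 : Metric.infDist z M = 0 := Metric.infDist_zero_of_mem hz
  have := dist_projPt hcp hne z
  rw [h0, dist_eq_zero] at this
  exact this.symm

lemma projPt_tendsto (hcp : IsCompact M) (hne : M.Nonempty) (hu : UniqNear M τ)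
    {w : Euc D} (hw : Metric.infDist w M < τ) :
    Filter.Tendsto (projPt M) (nhds w) (nhds (projPt M w)) := by
  refine Filter.tendsto_iff_seq_tendsto.mpr fun y hy => ?_
  -- y : ℕ → Euc D tends to w; show projPt M ∘ y tends to projPt M w
  refine Filter.tendsto_of_subseq_tendsto fun ns hns => ?_
  obtain ⟨b, hbM, φ, hφ, hbt⟩ := hcp.tendsto_subseq
    (fun n => projPt_mem hcp hne (y (ns n)))
  refine ⟨φ, ?_⟩
  have hyn : Filter.Tendsto (fun n => y (ns (φ n))) Filter.atTop (nhds w) :=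
    (hy.comp hns).comp hφ.tendsto_atTop
  -- dist w b = infDist w M
  have hd1 : Filter.Tendsto (fun n => dist (y (ns (φ n))) (projPt M (y (ns (φ n)))))
      Filter.atTop (nhds (dist w b)) :=
    (Filter.Tendsto.dist hyn hbt)
  have hd2 : Filter.Tendsto (fun n => dist (y (ns (φ n))) (projPt M (y (ns (φ n)))))
      Filter.atTop (nhds (Metric.infDist w M)) := by
    have : Filter.Tendsto (fun n => Metric.infDist (y (ns (φ n))) M) Filter.atTop
        (nhds (Metric.infDist w M)) := ((continuous_infDist_pt M).continuousAt).tendsto.comp hyn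
    refine this.congr fun n => (dist_projPt hcp hne _).symm
  have hdb : dist w b = Metric.infDist w M := tendsto_nhds_unique hd1 hd2
  have : b = projPt M w := projPt_eq_of hcp hne hu hw hbM hdb
  rwa [this] at hbt

/-- At a constrained max with admissible direction `v`, the directional derivative is `≤ 0`. -/
lemma inner_nonpos_of_isMaxOn {D : ℕ} {f : Euc D → ℝ} {G w v : Euc D} {s : Set (Euc D)}
    (hf : HasFDerivAt f (innerSL ℝ G) w) (hmax : IsMaxOn f s w)
    (hv : ∀ᶠ t in nhdsWithin (0:ℝ) (Set.Ioi 0), w + t • v ∈ s) : ⟪G, v⟫ ≤ 0 := by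
  have hline : HasDerivAt (fun t : ℝ => w + t • v) v 0 := by
    simpa using ((hasDerivAt_id (0:ℝ)).smul_const v).const_add w
  have hg : HasDerivAt (fun t : ℝ => f (w + t • v)) ⟪G, v⟫ 0 := by
    have hf' : HasFDerivAt f (innerSL ℝ G) ((fun t : ℝ => w + t • v) 0) := by simpa using hf
    have := hf'.comp_hasDerivAt (0:ℝ) hline
    exact this
  rw [hasDerivAt_iff_tendsto_slope] at hg
  have h' : Filter.Tendsto (slope (fun t : ℝ => f (w + t • v)) 0)
      (nhdsWithin (0:ℝ) (Set.Ioi 0)) (nhds ⟪G, v⟫) :=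
    hg.mono_left (nhdsWithin_mono _ (fun x hx => ne_of_gt hx))
  refine le_of_tendsto h' ?_
  filter_upwards [hv, self_mem_nhdsWithin] with t ht ht0
  rw [slope_def_field]
  apply div_nonpos_of_nonpos_of_nonneg
  · have : f (w + t • v) ≤ f w := by simpa using hmax ht
    simpa using this
  · simp only [sub_zero]; exact le_of_lt ht0

end Aux

section Aux2
variable {D : ℕ} {M : Set (Euc D)} {τ : ℝ}

set_option maxHeartbeats 1000000 in
lemma hasFDerivAt_infDist_sq (hcp : IsCompact M) (hne : M.Nonempty) (hu : UniqNear M τ)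
    {w : Euc D} (hw : Metric.infDist w M < τ) :
    HasFDerivAt (fun y => Metric.infDist y M ^ 2)
      (innerSL ℝ ((2:ℝ) • (w - projPt M w))) w := by
  rw [hasFDerivAt_iff_isLittleO_nhds_zero]
  rw [Asymptotics.isLittleO_iff]
  intro c hc
  have h1' : Filter.Tendsto (fun h : Euc D => w + h) (nhds 0) (nhds w) := by
    have hcont2 : Continuous fun h : Euc D => w + h := continuous_const.add continuous_id
    simpa using hcont2.tendsto 0
  have hcont : Filter.Tendsto (fun h : Euc D => ‖projPt M w - projPt M (w + h)‖) (nhds 0)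
      (nhds 0) := by
    have h2 := (projPt_tendsto hcp hne hu hw).comp h1'
    have h3 : Filter.Tendsto (fun h : Euc D => projPt M w - projPt M (w + h)) (nhds 0)
        (nhds (projPt M w - projPt M w)) := Filter.Tendsto.sub tendsto_const_nhds h2
    simpa using h3.norm
  have hsmall : ∀ᶠ h : Euc D in nhds 0, 3 * ‖h‖ + 2 * ‖projPt M w - projPt M (w + h)‖ ≤ c := by
    have e1 : ∀ᶠ h : Euc D in nhds 0, ‖h‖ < c / 6 := by
      have hn : Filter.Tendsto (fun h : Euc D => ‖h‖) (nhds 0) (nhds 0) := by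
        simpa using (continuous_norm (E := Euc D)).tendsto 0
      exact hn.eventually_lt_const (by linarith : (0:ℝ) < c/6)
    have e2 : ∀ᶠ h : Euc D in nhds 0, ‖projPt M w - projPt M (w + h)‖ < c / 4 :=
      hcont.eventually_lt_const (by linarith : (0:ℝ) < c/4)
    filter_upwards [e1, e2] with h h1 h2; linarith
  filter_upwards [hsmall] with h hh
  set a := projPt M w with ha
  set b := projPt M (w + h) with hb
  set dw := Metric.infDist w M with hdw
  set dh := Metric.infDist (w + h) M with hdh
  have hwa : ‖w - a‖ = dw := norm_sub_projPt hcp hne w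
  have hwb : ‖w + h - b‖ = dh := norm_sub_projPt hcp hne (w + h)
  have haM : a ∈ M := projPt_mem hcp hne w
  have hbM : b ∈ M := projPt_mem hcp hne (w + h)
  have hub : dh ≤ ‖w + h - a‖ := by
    rw [← dist_eq_norm]; exact Metric.infDist_le_dist_of_mem haM
  have hlb : dw ≤ ‖w - b‖ := by
    rw [← dist_eq_norm]; exact Metric.infDist_le_dist_of_mem hbM
  have hdh0 : 0 ≤ dh := Metric.infDist_nonneg
  have hdw0 : 0 ≤ dw := Metric.infDist_nonneg
  have h1 : dh ^ 2 ≤ ‖w + h - a‖ ^ 2 := by nlinarith [norm_nonneg (w + h - a)]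
  have h2 : dw ^ 2 ≤ ‖w - b‖ ^ 2 := by nlinarith [norm_nonneg (w - b)]
  have e1 : ‖w + h - a‖ ^ 2 = dw ^ 2 + 2 * ⟪w - a, h⟫ + ‖h‖ ^ 2 := by
    have e : w + h - a = (w - a) + h := by abel
    rw [e, norm_add_sq_real, hwa]
  have e2 : ‖w - b‖ ^ 2 = dh ^ 2 - 2 * ⟪w + h - b, h⟫ + ‖h‖ ^ 2 := by
    have e : w - b = (w + h - b) + (-h) := by abel
    rw [e, norm_add_sq_real, hwb, inner_neg_right, norm_neg]
    ring
  have expand : ⟪w + h - b, h⟫ = ⟪w - a, h⟫ + ⟪a - b, h⟫ + ‖h‖^2 := by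
    have e : w + h - b = (w - a) + (a - b) + h := by abel
    rw [e, inner_add_left, inner_add_left, real_inner_self_eq_norm_sq]
  have key1 : dh ^ 2 - dw ^ 2 - 2 * ⟪w - a, h⟫ ≤ ‖h‖^2 := by linarith
  have hcs : |⟪a - b, h⟫| ≤ ‖a - b‖ * ‖h‖ := abs_real_inner_le_norm _ _
  have key2 : - (2 * (‖a - b‖ * ‖h‖)) ≤ dh ^ 2 - dw ^ 2 - 2 * ⟪w - a, h⟫ := by
    nlinarith [abs_le.mp hcs, sq_nonneg ‖h‖]
  have hL : (innerSL ℝ ((2:ℝ) • (w - a))) h = 2 * ⟪w - a, h⟫ := by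
    rw [innerSL_apply_apply, real_inner_smul_left]
  calc ‖dh ^ 2 - dw ^ 2 - (innerSL ℝ ((2:ℝ) • (w - a))) h‖
      = |dh ^ 2 - dw ^ 2 - 2 * ⟪w - a, h⟫| := by rw [hL, Real.norm_eq_abs]
    _ ≤ (3 * ‖h‖ + 2 * ‖a - b‖) * ‖h‖ := by
        rw [abs_le]
        constructor
        · nlinarith [key2, sq_nonneg ‖h‖, mul_nonneg (norm_nonneg (a - b)) (norm_nonneg h),
            norm_nonneg h, norm_nonneg (a - b)]
        · nlinarith [key1, norm_nonneg h, norm_nonneg (a - b),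
            mul_nonneg (norm_nonneg (a - b)) (norm_nonneg h)]
    _ ≤ c * ‖h‖ := mul_le_mul_of_nonneg_right hh (norm_nonneg h)
end Aux2

section Aux3
variable {D : ℕ} {M : Set (Euc D)} {τ : ℝ}

-- membership eventuallies
lemma eventually_mem_closedBall_sphere {D : ℕ} (z w v : Euc D) (R : ℝ) (hR : 0 < R) (hmem : ‖w - z‖ ≤ R)
    (hv : ⟪w - z, v⟫ < 0) :
    ∀ᶠ t in nhdsWithin (0:ℝ) (Set.Ioi 0), w + t • v ∈ Metric.closedBall z R := by
  set t0 : ℝ := -⟪w - z, v⟫ / (‖v‖^2 + 1) with ht0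
  have ht0pos : 0 < t0 := by
    apply div_pos (by linarith) (by positivity)
  have hIoc : Set.Ioc (0:ℝ) t0 ∈ nhdsWithin (0:ℝ) (Set.Ioi 0) :=
    Ioc_mem_nhdsGT_of_mem ⟨le_refl 0, ht0pos⟩
  filter_upwards [hIoc] with t ht
  obtain ⟨ht1, ht2⟩ := ht
  rw [Metric.mem_closedBall, dist_eq_norm]
  have hexp : ‖w + t • v - z‖^2 = ‖w - z‖^2 + 2 * (t * ⟪w - z, v⟫) + t^2 * ‖v‖^2 := by
    have e : w + t • v - z = (w - z) + t • v := by abel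
    rw [e, norm_add_sq_real, real_inner_smul_right, norm_smul]
    simp [Real.norm_eq_abs, abs_of_pos ht1]
    ring
  have hle : ‖w + t • v - z‖^2 ≤ R^2 := by
    have h2 : t * (‖v‖^2 + 1) ≤ -⟪w - z, v⟫ := by
      rw [ht0] at ht2
      rw [← le_div_iff₀ (by positivity)]
      exact ht2
    have h3 : t * (t * (‖v‖^2 + 1)) ≤ t * (-⟪w - z, v⟫) :=
      mul_le_mul_of_nonneg_left h2 ht1.le
    have h4 : t * (-⟪w - z, v⟫) = -⟪w - z, v⟫ * t := by ring
    have h5 : 0 ≤ t * (-⟪w - z, v⟫) := mul_nonneg ht1.le (by linarith)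
    nlinarith [h3, norm_nonneg (w - z), mul_pos ht1 ht1, hmem, sq_nonneg t]
  have := norm_nonneg (w + t • v - z)
  nlinarith [hle]

end Aux3

section Aux4
variable {D : ℕ} {M : Set (Euc D)} {τ : ℝ}

lemma eventually_mem_closedBall_interior {D : ℕ} (z w v : Euc D) (R : ℝ)
    (hmem : ‖w - z‖ < R) :
    ∀ᶠ t in nhdsWithin (0:ℝ) (Set.Ioi 0), w + t • v ∈ Metric.closedBall z R := by
  set t0 : ℝ := (R - ‖w - z‖) / (‖v‖ + 1) with ht0
  have ht0pos : 0 < t0 := div_pos (by linarith) (by positivity)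
  filter_upwards [Ioc_mem_nhdsGT_of_mem ⟨le_refl 0, ht0pos⟩] with t ht
  obtain ⟨ht1, ht2⟩ := ht
  rw [Metric.mem_closedBall, dist_eq_norm]
  have e : w + t • v - z = (w - z) + t • v := by abel
  rw [e]
  calc ‖(w - z) + t • v‖ ≤ ‖w - z‖ + ‖t • v‖ := norm_add_le _ _
    _ = ‖w - z‖ + t * ‖v‖ := by rw [norm_smul, Real.norm_eq_abs, abs_of_pos ht1]
    _ ≤ R := by
        have : t * (‖v‖ + 1) ≤ R - ‖w - z‖ := by
          rw [ht0] at ht2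
          rw [← le_div_iff₀ (by positivity)]
          exact ht2
        nlinarith [ht1]

end Aux4
section Aux5
variable {D : ℕ} {M : Set (Euc D)} {τ : ℝ}

set_option maxHeartbeats 2000000 in
/-- Key extension step: the distance function grows linearly along the normal ray. -/
lemma ext_step (hcp : IsCompact M) (hne : M.Nonempty) (hu : UniqNear M τ)
    {z : Euc D} {R s : ℝ} (hs : Metric.infDist z M = s) (hz0 : 0 < s) (hR0 : 0 < R)
    (hRle : R ≤ s) (hlt : s + R < τ) :
    Metric.infDist (z + (R / s) • (z - projPt M z)) M = s + R ∧
      projPt M (z + (R / s) • (z - projPt M z)) = projPt M z := by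
  have hza : ‖z - projPt M z‖ = s := by rw [norm_sub_projPt hcp hne z, hs]
  have haM : projPt M z ∈ M := projPt_mem hcp hne z
  have hcontf : ContinuousOn (fun y : Euc D => Metric.infDist y M ^ 2)
      (Metric.closedBall z R) := ((continuous_infDist_pt M).pow 2).continuousOn
  obtain ⟨w, hwmem, hwmax⟩ := (isCompact_closedBall z R).exists_isMaxOn
    (Metric.nonempty_closedBall.mpr hR0.le) hcontf
  obtain ⟨m, hm⟩ : ∃ m, Metric.infDist w M = m := ⟨_, rfl⟩
  obtain ⟨b, hbdef⟩ : ∃ b, projPt M w = b := ⟨_, rfl⟩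
  have hwb : ‖w - b‖ = m := by rw [← hbdef, norm_sub_projPt hcp hne w, hm]
  have hbM : b ∈ M := hbdef ▸ projPt_mem hcp hne w
  have hwz : ‖w - z‖ ≤ R := by
    rw [← dist_eq_norm]; exact Metric.mem_closedBall.mp hwmem
  have hsm : s ≤ m := by
    have h1 : Metric.infDist z M ^ 2 ≤ Metric.infDist w M ^ 2 := by
      simpa using hwmax (Metric.mem_closedBall_self hR0.le)
    rw [hs, hm] at h1
    nlinarith [hz0.le, Metric.infDist_nonneg (x := w) (s := M), hm]
  have hm0 : 0 < m := lt_of_lt_of_le hz0 hsm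
  have hmsR : m ≤ s + R := by
    have h2 := Metric.infDist_le_infDist_add_dist (x := w) (y := z) (s := M)
    rw [dist_eq_norm, hs, hm] at h2
    linarith
  have hmτ : m < τ := by linarith
  have hsτ : s < τ := by linarith
  obtain ⟨A, hA⟩ : ∃ A : Euc D, (2:ℝ) • (w - b) = A := ⟨_, rfl⟩
  obtain ⟨U, hU⟩ : ∃ U : Euc D, w - z = U := ⟨_, rfl⟩
  have hAnorm : ‖A‖ = 2 * m := by
    rw [← hA, norm_smul, Real.norm_ofNat, hwb]
  have hUnorm' : ‖U‖ ≤ R := hU ▸ hwz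
  have hD : HasFDerivAt (fun y => Metric.infDist y M ^ 2) (innerSL ℝ A) w := by
    rw [← hA, ← hbdef]
    exact hasFDerivAt_infDist_sq hcp hne hu (by rw [hm]; exact hmτ)
  -- w is on the sphere
  have hUnorm : ‖U‖ = R := by
    by_contra hneq
    have hlt' : ‖w - z‖ < R := by rw [hU]; exact lt_of_le_of_ne hUnorm' hneq
    have h0 : ⟪A, A⟫ ≤ 0 := inner_nonpos_of_isMaxOn hD hwmax
      (eventually_mem_closedBall_interior z w A R hlt')
    rw [real_inner_self_eq_norm_sq, hAnorm] at h0
    nlinarith [hm0]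
  have T1 : ∀ v : Euc D, ⟪U, v⟫ < 0 → ⟪A, v⟫ ≤ 0 := fun v hv =>
    inner_nonpos_of_isMaxOn hD hwmax
      (eventually_mem_closedBall_sphere z w v R hR0 hwz (hU ▸ hv))
  have T2 : ∀ v : Euc D, ⟪U, v⟫ ≤ 0 → ⟪A, v⟫ ≤ 0 := by
    intro v hv
    by_contra hpos
    push_neg at hpos
    have hεpos : 0 < ⟪A, v⟫ / (2 * (|⟪A, U⟫| + 1)) := div_pos hpos (by positivity)
    have h1 : ⟪U, v - (⟪A, v⟫ / (2 * (|⟪A, U⟫| + 1))) • U⟫ < 0 := by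
      rw [inner_sub_right, real_inner_smul_right, real_inner_self_eq_norm_sq, hUnorm]
      have : 0 < (⟪A, v⟫ / (2 * (|⟪A, U⟫| + 1))) * R^2 := by positivity
      linarith
    have h2 := T1 _ h1
    rw [inner_sub_right, real_inner_smul_right] at h2
    have h3 : ⟪A, v⟫ ≤ (⟪A, v⟫ / (2 * (|⟪A, U⟫| + 1))) * |⟪A, U⟫| := by
      have habs : ⟪A, U⟫ ≤ |⟪A, U⟫| := le_abs_self _
      nlinarith [hεpos]
    have hd0 : (0:ℝ) ≤ |⟪A, U⟫| := abs_nonneg _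
    rw [div_mul_eq_mul_div, le_div_iff₀ (by positivity)] at h3
    nlinarith [hpos, hd0]
  have hAU0 : 0 ≤ ⟪A, U⟫ := by
    have h4 : ⟪U, -U⟫ < 0 := by
      rw [inner_neg_right, real_inner_self_eq_norm_sq, hUnorm]
      nlinarith
    have := T1 _ h4
    rw [inner_neg_right] at this
    linarith
  -- A is a nonnegative multiple of U
  have e2 : ⟪U, (R^2) • A - ⟪A, U⟫ • U⟫ = 0 := by
    rw [inner_sub_right, real_inner_smul_right, real_inner_smul_right,
      real_inner_self_eq_norm_sq, hUnorm, real_inner_comm U A]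
    ring
  have e3a := T2 _ (le_of_eq e2)
  have e3b : 0 ≤ ⟪A, (R^2) • A - ⟪A, U⟫ • U⟫ := by
    have h5 := T2 (-((R^2) • A - ⟪A, U⟫ • U)) (by rw [inner_neg_right, e2]; simp)
    rw [inner_neg_right] at h5
    linarith
  have e4 : ⟪A, (R^2) • A - ⟪A, U⟫ • U⟫ = 0 := le_antisymm e3a e3b
  have hGeq : (R^2) • A = ⟪A, U⟫ • U := by
    have hself : ⟪(R^2) • A - ⟪A, U⟫ • U, (R^2) • A - ⟪A, U⟫ • U⟫ = 0 := by
      rw [inner_sub_left, real_inner_smul_left, real_inner_smul_left, e4, e2]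
      ring
    rw [← sub_eq_zero]
    exact inner_self_eq_zero.mp hself
  -- compute the coefficient
  have hcoef : ⟪A, U⟫ = 2 * R * m := by
    have hn := congrArg (fun x : Euc D => ‖x‖) hGeq
    simp only [norm_smul, Real.norm_eq_abs, hAnorm, hUnorm] at hn
    rw [abs_of_nonneg (sq_nonneg R), abs_of_nonneg hAU0] at hn
    -- hn : R^2 * (2*m) = ⟪A,U⟫ * R
    have hR' : R ≠ 0 := ne_of_gt hR0
    apply mul_right_cancel₀ hR'
    rw [← hn]
    ring
  have hAeq : A = ((2 * m) / R) • U := by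
    have h6 : (R^2) • A = (R^2) • (((2 * m) / R) • U) := by
      rw [hGeq, hcoef, smul_smul]
      congr 1
      field_simp
    have hR2 : (R^2 : ℝ) ≠ 0 := by positivity
    exact smul_right_injective _ hR2 h6
  have hwbeq : w - b = (m / R) • U := by
    have h7 : (2:ℝ) • (w - b) = (2:ℝ) • ((m / R) • U) := by
      rw [hA, hAeq, smul_smul]
      congr 1
      field_simp
    exact smul_right_injective _ (by norm_num : (2:ℝ) ≠ 0) h7
  -- identify b as the nearest point of z, and m = s + R
  have hzb : z - b = ((m - R) / R) • U := by
    have h8 : z - b = (w - b) - U := by rw [← hU]; abel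
    have e : ((m - R)/R) = m/R - 1 := by field_simp
    rw [h8, hwbeq, e, sub_smul, one_smul]
  have hzbnorm : ‖z - b‖ = m - R := by
    rw [hzb, norm_smul, Real.norm_eq_abs, hUnorm,
      abs_of_nonneg (div_nonneg (by linarith : (0:ℝ) ≤ m - R) hR0.le)]
    field_simp
  have hsleb : s ≤ m - R := by
    have h10 := Metric.infDist_le_dist_of_mem (x := z) hbM
    rw [dist_eq_norm, hzbnorm, hs] at h10
    exact h10
  have hmeq : m = s + R := le_antisymm hmsR (by linarith)
  have hzbs : ‖z - b‖ = s := by rw [hzbnorm, hmeq]; ring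
  have hba : b = projPt M z := projPt_eq_of hcp hne hu (by rw [hs]; exact hsτ) hbM
    (by rw [dist_eq_norm, hzbs, hs])
  have hUeq : U = (R / s) • (z - projPt M z) := by
    have h9 : z - projPt M z = (s / R) • U := by
      rw [← hba, hzb, hmeq]
      congr 1
      ring
    rw [h9, smul_smul, show R / s * (s / R) = 1 from by
      field_simp, one_smul]
  have hwpt : z + (R / s) • (z - projPt M z) = w := by rw [← hUeq, ← hU]; abel
  constructor
  · rw [hwpt, hm, hmeq]
  · rw [hwpt, hbdef, hba]
end Aux5
section Aux6
variable {D : ℕ} {M : Set (Euc D)} {τ : ℝ}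

/-- Iterated extension: the whole normal ray up to `τ''` consists of points projecting to `a`. -/
lemma ext_ray (hcp : IsCompact M) (hne : M.Nonempty) (hu : UniqNear M τ)
    {x : Euc D} {s τ'' : ℝ} (hs : Metric.infDist x M = s) (hs0 : 0 < s)
    (hsle : s ≤ τ'') (hτ'' : τ'' < τ) :
    Metric.infDist (projPt M x + (τ'' / s) • (x - projPt M x)) M = τ'' := by
  have hτ''0 : 0 < τ'' := lt_of_lt_of_le hs0 hsle
  set a := projPt M x with ha
  -- the statement we iterate
  set P : ℝ → Prop := fun t =>
    Metric.infDist (a + (t / s) • (x - a)) M = t ∧ projPt M (a + (t / s) • (x - a)) = a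
    with hP
  have base : P s := by
    have hxa : a + (s / s) • (x - a) = x := by
      rw [div_self (ne_of_gt hs0), one_smul]; abel
    refine ⟨by rw [hxa, hs], by rw [hxa]⟩
  have step : ∀ t, P t → s ≤ t → t < τ'' → P (min (2*t) τ'') := by
    rintro t ⟨hPd, hPp⟩ hst htτ
    have ht0 : 0 < t := lt_of_lt_of_le hs0 hst
    set R := min (2*t) τ'' - t with hR
    have hR0 : 0 < R := by
      have : t < min (2*t) τ'' := lt_min (by linarith) htτ
      simp only [hR]; linarith
    have hRle : R ≤ t := by
      have : min (2*t) τ'' ≤ 2*t := min_le_left _ _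
      simp only [hR]; linarith
    have hsum : t + R < τ := by
      have : min (2*t) τ'' ≤ τ'' := min_le_right _ _
      simp only [hR]; linarith
    obtain ⟨hc1, hc2⟩ := ext_step hcp hne hu hPd ht0 hR0 hRle hsum
    set zt := a + (t / s) • (x - a) with hzt
    have hdir : zt - projPt M zt = (t / s) • (x - a) := by
      rw [hPp, hzt]; abel
    have hpoint : zt + (R / t) • (zt - projPt M zt) = a + ((t + R) / s) • (x - a) := by
      rw [hdir, hzt, smul_smul]
      have : R / t * (t / s) = R / s := by field_simp
      rw [this]
      rw [show ((t + R) / s) = t/s + R/s from by field_simp]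
      rw [add_smul]
      abel
    have htR : t + R = min (2*t) τ'' := by simp only [hR]; ring
    constructor
    · rw [← htR, ← hpoint, hc1]
    · rw [← htR, ← hpoint, hc2, hPp]
  -- iterate
  have iter : ∀ n : ℕ, P (min (2^n * s) τ'') := by
    intro n
    induction n with
    | zero => simpa [min_eq_left hsle] using base
    | succ n ih =>
      rcases le_or_gt τ'' (2^n * s) with hcase | hcase
      · have h1 : min (2^n * s) τ'' = τ'' := min_eq_right hcase
        have hp : (2:ℝ)^(n+1) * s = 2 * (2^n * s) := by rw [pow_succ]; ring
        have h2 : min (2^(n+1) * s) τ'' = τ'' := min_eq_right (by linarith [hτ''0])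
        rw [h2, ← h1]; exact ih
      · have h1 : min (2^n * s) τ'' = 2^n * s := min_eq_left hcase.le
        have h2n : (1:ℝ) ≤ 2^n := one_le_pow₀ (by norm_num : (1:ℝ) ≤ 2)
        have hstep := step _ ih (by rw [h1]; nlinarith [hs0]) (by rw [h1]; exact hcase)
        have h3 : min (2 * min (2^n * s) τ'') τ'' = min (2^(n+1) * s) τ'' := by
          rw [h1]; congr 1; ring
        rw [← h3]; exact hstep
  obtain ⟨n, hn⟩ : ∃ n : ℕ, τ'' ≤ 2^n * s := by
    obtain ⟨n, hn⟩ := pow_unbounded_of_one_lt (τ''/s) (one_lt_two (α := ℝ))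
    exact ⟨n, by rw [div_lt_iff₀ hs0] at hn; nlinarith⟩
  have := (iter n).1
  rwa [min_eq_right hn] at this

/-- Federer's key inequality 4.8(7). -/
lemma key_ineq (hcp : IsCompact M) (hne : M.Nonempty) (hu : UniqNear M τ)
    {x : Euc D} {τ'' : ℝ} (hτ''0 : 0 < τ'') (hxle : Metric.infDist x M ≤ τ'')
    (hτ'' : τ'' < τ) {b : Euc D} (hb : b ∈ M) :
    ⟪x - projPt M x, b - projPt M x⟫ ≤
      Metric.infDist x M * ‖b - projPt M x‖^2 / (2 * τ'') := by
  rcases eq_or_lt_of_le (Metric.infDist_nonneg (x := x) (s := M)) with h0 | h0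
  · -- x ∈ M
    have hxM : x ∈ M := by
      have : Metric.infDist x M = 0 := h0.symm
      have hx := dist_projPt hcp hne x
      rw [this, dist_eq_zero] at hx
      rw [hx]; exact projPt_mem hcp hne x
    rw [projPt_of_mem hcp hne hxM]
    simp [Metric.infDist_zero_of_mem hxM]
  · set s := Metric.infDist x M with hs
    set a := projPt M x with ha
    have hray := ext_ray hcp hne hu (s := s) (τ'' := τ'') rfl h0 hxle hτ''
    set y := a + (τ'' / s) • (x - a) with hy
    have hyb : τ'' ≤ ‖y - b‖ := by
      have := Metric.infDist_le_dist_of_mem (x := y) hb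
      rw [dist_eq_norm, hray] at this
      exact this
    have hexp : ‖y - b‖^2 = τ''^2 - 2 * (τ''/s) * ⟪x - a, b - a⟫ + ‖b - a‖^2 := by
      have e : y - b = (τ''/s) • (x - a) - (b - a) := by rw [hy]; abel
      have hxa : ‖x - a‖ = s := by rw [ha, norm_sub_projPt hcp hne x, ← hs]
      rw [e, norm_sub_sq_real, real_inner_smul_left, norm_smul, Real.norm_eq_abs,
        abs_of_pos (div_pos hτ''0 h0), hxa]
      have hsne : s ≠ 0 := ne_of_gt h0
      field_simp
    have h2 : τ''^2 ≤ ‖y - b‖^2 := by nlinarith [hτ''0]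
    have h3 : 2 * (τ''/s) * ⟪x - a, b - a⟫ ≤ ‖b - a‖^2 := by nlinarith [hexp]
    rw [le_div_iff₀ (by linarith : (0:ℝ) < 2 * τ'')]
    have hss : 0 < τ''/s := div_pos hτ''0 h0
    calc ⟪x - a, b - a⟫ * (2*τ'') = (2 * (τ''/s) * ⟪x - a, b - a⟫) * s := by
          field_simp
      _ ≤ ‖b - a‖^2 * s := by nlinarith [h3, h0]
      _ = s * ‖b - a‖^2 := by ring
end Aux6
section Aux7
variable {D : ℕ} {M : Set (Euc D)} {τ : ℝ}

/-- Federer's Lipschitz estimate 4.8(8) for the nearest-point projection. -/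
lemma projPt_lipschitz (hcp : IsCompact M) (hne : M.Nonempty) (hu : UniqNear M τ)
    {x y : Euc D} {r τ'' : ℝ} (hr0 : 0 ≤ r) (hr : r < τ'') (hτ'' : τ'' < τ)
    (hx : Metric.infDist x M ≤ r) (hy : Metric.infDist y M ≤ r) :
    ‖projPt M x - projPt M y‖ ≤ (τ'' / (τ'' - r)) * ‖x - y‖ := by
  have hτ''0 : 0 < τ'' := lt_of_le_of_lt hr0 hr
  set a := projPt M x with ha
  set b := projPt M y with hb
  have haM : a ∈ M := projPt_mem hcp hne x
  have hbM : b ∈ M := projPt_mem hcp hne y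
  have k1 : ⟪x - a, b - a⟫ ≤ r * ‖b - a‖^2 / (2 * τ'') := by
    refine le_trans (key_ineq hcp hne hu hτ''0 (le_trans hx hr.le) hτ'' hbM) ?_
    have h1 : Metric.infDist x M * ‖b - a‖^2 ≤ r * ‖b - a‖^2 :=
      mul_le_mul_of_nonneg_right hx (sq_nonneg _)
    exact div_le_div_of_nonneg_right h1 (by linarith) |>.trans (le_refl _)
  have k2 : ⟪y - b, a - b⟫ ≤ r * ‖a - b‖^2 / (2 * τ'') := by
    refine le_trans (key_ineq hcp hne hu hτ''0 (le_trans hy hr.le) hτ'' haM) ?_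
    have h1 : Metric.infDist y M * ‖a - b‖^2 ≤ r * ‖a - b‖^2 :=
      mul_le_mul_of_nonneg_right hy (sq_nonneg _)
    exact div_le_div_of_nonneg_right h1 (by linarith) |>.trans (le_refl _)
  have hdecomp : ‖a - b‖^2 = ⟪x - y, a - b⟫ + ⟪x - a, b - a⟫ + ⟪y - b, a - b⟫ := by
    have e : (a - b : Euc D) = (x - y) - (x - a) + (y - b) := by abel
    calc ‖a - b‖^2 = ⟪a - b, a - b⟫ := (real_inner_self_eq_norm_sq _).symm
      _ = ⟪(x - y) - (x - a) + (y - b), a - b⟫ := by rw [← e]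
      _ = ⟪x - y, a - b⟫ - ⟪x - a, a - b⟫ + ⟪y - b, a - b⟫ := by
          rw [inner_add_left, inner_sub_left]
      _ = ⟪x - y, a - b⟫ + ⟪x - a, b - a⟫ + ⟪y - b, a - b⟫ := by
          rw [show (b - a : Euc D) = -(a - b) from by abel, inner_neg_right]
          ring
  have hnorm : ‖b - a‖ = ‖a - b‖ := norm_sub_rev _ _
  have hcs : ⟪x - y, a - b⟫ ≤ ‖x - y‖ * ‖a - b‖ := real_inner_le_norm _ _
  have hmain : ‖a - b‖^2 * ((τ'' - r) / τ'') ≤ ‖x - y‖ * ‖a - b‖ := by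
    rw [hnorm] at k1
    have : ‖a - b‖^2 ≤ ‖x - y‖ * ‖a - b‖ + r * ‖a - b‖^2 / τ'' := by
      have hsum : ⟪x - a, b - a⟫ + ⟪y - b, a - b⟫ ≤ r * ‖a - b‖^2 / τ'' := by
        have := add_le_add k1 k2
        calc ⟪x - a, b - a⟫ + ⟪y - b, a - b⟫ ≤
            r * ‖a - b‖^2 / (2*τ'') + r * ‖a - b‖^2 / (2*τ'') := this
          _ = r * ‖a - b‖^2 / τ'' := by field_simp; ring
      linarith [hdecomp, hcs]
    have h2 : ‖a - b‖^2 * ((τ'' - r) / τ'') = ‖a - b‖^2 - r * ‖a - b‖^2 / τ'' := by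
      field_simp
    linarith
  rcases eq_or_lt_of_le (norm_nonneg (a - b)) with h0 | h0
  · rw [← h0]
    have hd : (0:ℝ) < τ'' - r := by linarith
    positivity
  · have hfrac : 0 < (τ'' - r) / τ'' := div_pos (by linarith) hτ''0
    have h3 : ‖a - b‖ * ((τ'' - r) / τ'') ≤ ‖x - y‖ := by
      have := hmain
      nlinarith [h0]
    rw [show (τ'' / (τ'' - r)) * ‖x - y‖ = ‖x - y‖ / ((τ'' - r) / τ'') from by
      field_simp]
    rw [le_div_iff₀ hfrac]
    exact h3
end Aux7
section Main
variable {D : ℕ}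

theorem stmt_1' (M : Set (Euc D))
    (hcomp : IsCompact M) (hconn : IsConnected M)
    (τmin : ℝ) (hτ : 0 < τmin)
    (hu : UniqNear M τmin)
    (p q : Euc D) (hp : p ∈ M) (hq : q ∈ M) (hpq : ‖p - q‖ ≤ τmin) :
    ENNReal.ofReal ‖p - q‖ ≤
        (⨅ (γ : ℝ → Euc D) (_ : ContinuousOn γ (Set.Icc 0 1))
          (_ : Set.MapsTo γ (Set.Icc 0 1) M) (_ : γ 0 = p) (_ : γ 1 = q),
          eVariationOn γ (Set.Icc 0 1)) ∧
      (⨅ (γ : ℝ → Euc D) (_ : ContinuousOn γ (Set.Icc 0 1))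
          (_ : Set.MapsTo γ (Set.Icc 0 1) M) (_ : γ 0 = p) (_ : γ 1 = q),
          eVariationOn γ (Set.Icc 0 1)) ≤ ENNReal.ofReal (2 * ‖p - q‖) := by
  have hne : M.Nonempty := hconn.nonempty
  constructor
  · refine le_iInf fun γ => le_iInf fun hcont => le_iInf fun hmaps => le_iInf fun h0 =>
      le_iInf fun h1 => ?_
    have h01 : (0:ℝ) ∈ Set.Icc (0:ℝ) 1 := by norm_num
    have h11 : (1:ℝ) ∈ Set.Icc (0:ℝ) 1 := by norm_num
    have hev := eVariationOn.edist_le γ h01 h11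
    rw [h0, h1] at hev
    refine le_trans (le_of_eq ?_) hev
    rw [edist_dist, dist_eq_norm]
  · set c := ‖p - q‖ with hc
    have hc0 : 0 ≤ c := norm_nonneg _
    set r := c / 2 with hr
    have hr0 : 0 ≤ r := by linarith
    have hrτ : r < τmin := by rw [hr]; linarith
    have hbound : ∀ θ : ℝ, r < θ → θ < τmin →
        (⨅ (γ : ℝ → Euc D) (_ : ContinuousOn γ (Set.Icc 0 1))
          (_ : Set.MapsTo γ (Set.Icc 0 1) M) (_ : γ 0 = p) (_ : γ 1 = q),
          eVariationOn γ (Set.Icc 0 1)) ≤ ENNReal.ofReal (θ / (θ - r) * c) := by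
      intro θ hθ1 hθ2
      have hθ0 : 0 < θ := lt_of_le_of_lt hr0 hθ1
      have hθr : 0 < θ - r := by linarith
      have hk0 : 0 ≤ θ / (θ - r) * c := by positivity
      set γ := fun t : ℝ => projPt M (p + t • (q - p)) with hγ
      have hseg : ∀ t : ℝ, t ∈ Set.Icc (0:ℝ) 1 →
          Metric.infDist (p + t • (q - p)) M ≤ r := by
        intro t ⟨ht0, ht1⟩
        rcases le_or_gt t (1/2) with hhalf | hhalf
        · have h1 : Metric.infDist (p + t • (q - p)) M ≤ dist (p + t • (q - p)) p :=
            Metric.infDist_le_dist_of_mem hp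
          have h2 : dist (p + t • (q - p)) p = t * c := by
            rw [dist_eq_norm, show p + t • (q - p) - p = t • (q - p) from by abel,
              norm_smul, Real.norm_eq_abs, abs_of_nonneg ht0, hc, norm_sub_rev]
          rw [h2] at h1
          refine le_trans h1 ?_
          rw [hr]; nlinarith
        · have h1 : Metric.infDist (p + t • (q - p)) M ≤ dist (p + t • (q - p)) q :=
            Metric.infDist_le_dist_of_mem hq
          have h2 : dist (p + t • (q - p)) q = (1 - t) * c := by
            rw [dist_eq_norm, show p + t • (q - p) - q = (1 - t) • (p - q) from by module, norm_smul, Real.norm_eq_abs,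
              abs_of_nonneg (by linarith : (0:ℝ) ≤ 1 - t), hc]
          rw [h2] at h1
          refine le_trans h1 ?_
          rw [hr]; nlinarith
      have hlip : LipschitzOnWith (Real.toNNReal (θ / (θ - r) * c)) γ (Set.Icc 0 1) := by
        apply LipschitzOnWith.of_dist_le_mul
        intro t ht t' ht'
        have hd : dist (γ t) (γ t') ≤ θ / (θ - r) * ‖(p + t • (q - p)) - (p + t' • (q - p))‖ := by
          rw [dist_eq_norm]
          exact projPt_lipschitz hcomp hne hu hr0 hθ1 hθ2 (hseg t ht) (hseg t' ht')
        have he : ‖(p + t • (q - p)) - (p + t' • (q - p))‖ = dist t t' * c := by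
          rw [show (p + t • (q - p)) - (p + t' • (q - p)) = (t - t') • (q - p) from by
            rw [sub_smul]; abel, norm_smul, Real.norm_eq_abs, Real.dist_eq, hc, norm_sub_rev]
        rw [he] at hd
        refine le_trans hd (le_of_eq ?_)
        rw [Real.coe_toNNReal _ hk0]
        ring
      have hγ0 : γ 0 = p := by
        rw [hγ]
        simp only [zero_smul, add_zero]
        exact projPt_of_mem hcomp hne hp
      have hγ1 : γ 1 = q := by
        rw [hγ]
        simp only [one_smul]
        rw [show p + (q - p) = q from by abel]
        exact projPt_of_mem hcomp hne hq
      have hmaps : Set.MapsTo γ (Set.Icc 0 1) M := fun t _ => projPt_mem hcomp hne _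
      have hvar : eVariationOn γ (Set.Icc 0 1) ≤ ENNReal.ofReal (θ / (θ - r) * c) := by
        have h1 := hlip.comp_eVariationOn_le (Set.mapsTo_id (Set.Icc (0:ℝ) 1))
        have h2 : eVariationOn (id : ℝ → ℝ) (Set.Icc 0 1) ≤ ENNReal.ofReal 1 := by
          have h3 := (monotoneOn_id (s := Set.Icc (0:ℝ) 1)).eVariationOn_le
            (Set.left_mem_Icc.mpr zero_le_one) (Set.right_mem_Icc.mpr zero_le_one)
          simpa using h3
        calc eVariationOn γ (Set.Icc 0 1) = eVariationOn (γ ∘ id) (Set.Icc 0 1) := rfl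
          _ ≤ (Real.toNNReal (θ / (θ - r) * c) : ℝ≥0∞) * eVariationOn id (Set.Icc 0 1) := h1
          _ ≤ (Real.toNNReal (θ / (θ - r) * c) : ℝ≥0∞) * ENNReal.ofReal 1 :=
              mul_le_mul_right h2 _
          _ = ENNReal.ofReal (θ / (θ - r) * c) := by
              rw [ENNReal.ofReal_one, mul_one]
              rfl
      exact le_trans (iInf_le_of_le γ (iInf_le_of_le (hlip.continuousOn)
        (iInf_le_of_le hmaps (iInf_le_of_le hγ0 (iInf_le_of_le hγ1 le_rfl))))) hvar
    -- take the limit θ → τmin⁻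
    have htend : Filter.Tendsto (fun θ : ℝ => ENNReal.ofReal (θ / (θ - r) * c))
        (nhdsWithin τmin (Set.Iio τmin)) (nhds (ENNReal.ofReal (τmin / (τmin - r) * c))) := by
      have hcont : ContinuousAt (fun θ : ℝ => θ / (θ - r) * c) τmin := by
        apply ContinuousAt.mul _ continuousAt_const
        exact ContinuousAt.div continuousAt_id (continuousAt_id.sub continuousAt_const)
          (show τmin - r ≠ 0 from sub_ne_zero.mpr (ne_of_gt hrτ))
      exact (ENNReal.continuous_ofReal.continuousAt.tendsto.comp hcont.tendsto).mono_left
        nhdsWithin_le_nhds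
    have hev : ∀ᶠ θ in nhdsWithin τmin (Set.Iio τmin),
        (⨅ (γ : ℝ → Euc D) (_ : ContinuousOn γ (Set.Icc 0 1))
          (_ : Set.MapsTo γ (Set.Icc 0 1) M) (_ : γ 0 = p) (_ : γ 1 = q),
          eVariationOn γ (Set.Icc 0 1)) ≤ ENNReal.ofReal (θ / (θ - r) * c) := by
      filter_upwards [Ioo_mem_nhdsLT_of_mem (⟨hrτ, le_refl τmin⟩ : τmin ∈ Set.Ioc r τmin)]
        with θ hθ
      exact hbound θ hθ.1 hθ.2
    have hlim := ge_of_tendsto htend hev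
    refine le_trans hlim (ENNReal.ofReal_le_ofReal ?_)
    have h1 : τmin / (τmin - r) ≤ 2 := by
      rw [div_le_iff₀ (by linarith)]
      rw [hr]; linarith
    nlinarith [div_nonneg hτ.le (by linarith : (0:ℝ) ≤ τmin - r)]
end Main

theorem stmt_1 {D d : ℕ} (M : Set (Euc D)) (hM : IsC2SubmanifoldWithBoundary d M)
    (hcomp : IsCompact M) (hconn : IsConnected M)
    (τmin : ℝ) (hτ : 0 < τmin) (hreach : ENNReal.ofReal τmin ≤ reach M)
    (p q : Euc D) (hp : p ∈ M) (hq : q ∈ M) (hpq : ‖p - q‖ ≤ τmin) :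
    ENNReal.ofReal ‖p - q‖ ≤ geodesicDist M p q ∧
      geodesicDist M p q ≤ ENNReal.ofReal (2 * ‖p - q‖) := by
  have hne : M.Nonempty := hconn.nonempty
  have hu : UniqNear M τmin := by
    intro z hz b hbM c hcM hdb hdc
    by_contra hbc
    have hzmed : z ∈ medialAxis M := ⟨b, hbM, c, hcM, hbc, hdb, hdc⟩
    have h1 : ENNReal.ofReal τmin ≤ EMetric.infEdist z M := by
      refine le_trans hreach ?_
      exact iInf_le_of_le z (iInf_le _ hzmed)
    have h2 : τmin ≤ Metric.infDist z M := by
      have h3 := ENNReal.toReal_mono (Metric.infEdist_ne_top hne) h1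
      rwa [ENNReal.toReal_ofReal hτ.le] at h3
    linarith
  exact stmt_1' M hcomp hconn τmin hτ hu p q hp hq hpq
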